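/- The number of sequences of integers in {0, 1, …, k} that alternate between local maxima and local minima, where the subsequence of local minima is first strictly decreasing then strictly increasing and each local maximum exceeds its neighboring local minima (the 'typical sequences' of width at most k), is at most 2^{O(k)}; concretely, it is bounded by 2^{2k+2}. -/

import Mathlib

/-- The typical sequences with values in `{0, …, k}`: integer sequences with no two
consecutive equal entries that are irreducible under the simplification operation,
i.e. no interval can be removed because between any two entries at distance at
least two there is an entry lying strictly outside the range they span. -/
def TypicalSeq (k : ℕ) : Set (List ℤ) :=
  {l : List ℤ | (∀ x ∈ l, 0 ≤ x ∧ x ≤ (k : ℤ)) ∧ l.Chain' (· ≠ ·) ∧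
    ∀ i j : ℕ, i + 2 ≤ j → j < l.length →
      ∃ t, i < t ∧ t < j ∧
        (l.getD t 0 < min (l.getD i 0) (l.getD j 0) ∨
          max (l.getD i 0) (l.getD j 0) < l.getD t 0)}

namespace BK

/-- The order/index part of typicality. -/
def Typ (l : List ℤ) : Prop :=
  l.Chain' (· ≠ ·) ∧
    ∀ i j : ℕ, i + 2 ≤ j → j < l.length →
      ∃ t, i < t ∧ t < j ∧
        (l.getD t 0 < min (l.getD i 0) (l.getD j 0) ∨
          max (l.getD i 0) (l.getD j 0) < l.getD t 0)

lemma getD_eq (l : List ℤ) {i : ℕ} (h : i < l.length) : l.getD i 0 = l[i] :=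
  List.getD_eq_getElem l 0 h

lemma getD_take (l : List ℤ) {n i : ℕ} (h : i < (l.take n).length) :
    (l.take n).getD i 0 = l.getD i 0 := by
  have h' : i < l.length := by simp at h; omega
  rw [getD_eq _ h, getD_eq _ h', List.getElem_take]

lemma getD_drop (l : List ℤ) {n i : ℕ} (h : i < (l.drop n).length) :
    (l.drop n).getD i 0 = l.getD (n + i) 0 := by
  have h' : n + i < l.length := by simp at h; omega
  rw [getD_eq _ h, getD_eq _ h', List.getElem_drop]

lemma getD_reverse (l : List ℤ) {i : ℕ} (h : i < l.length) :
    l.reverse.getD i 0 = l.getD (l.length - 1 - i) 0 := by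
  have h2 : i < l.reverse.length := by simpa using h
  have h' : l.length - 1 - i < l.length := by omega
  rw [getD_eq _ h2, getD_eq _ h', List.getElem_reverse]

lemma getD_neg (l : List ℤ) {i : ℕ} (h : i < l.length) :
    (l.map (fun x => -x)).getD i 0 = -(l.getD i 0) := by
  have h2 : i < (l.map (fun x => -x)).length := by simpa using h
  rw [getD_eq _ h2, getD_eq _ h, List.getElem_map]

lemma Typ.take {l : List ℤ} (h : Typ l) (n : ℕ) : Typ (l.take n) := by
  refine ⟨h.1.take n, fun i j hij hj => ?_⟩
  have hj' : j < l.length := by simp at hj; omega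
  obtain ⟨t, ht1, ht2, ht3⟩ := h.2 i j hij hj'
  refine ⟨t, ht1, ht2, ?_⟩
  rwa [getD_take _ hj, getD_take _ (by omega), getD_take _ (by omega)]

lemma Typ.drop {l : List ℤ} (h : Typ l) (n : ℕ) : Typ (l.drop n) := by
  refine ⟨h.1.drop n, fun i j hij hj => ?_⟩
  have hj' : n + j < l.length := by simp at hj; omega
  obtain ⟨t, ht1, ht2, ht3⟩ := h.2 (n + i) (n + j) (by omega) hj'
  refine ⟨t - n, by omega, by omega, ?_⟩
  rw [getD_drop _ hj, getD_drop _ (by simp at hj ⊢; omega), getD_drop _ (by simp at hj ⊢; omega)]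
  have : n + (t - n) = t := by omega
  rw [this]
  exact ht3

lemma Typ.tail {l : List ℤ} (h : Typ l) : Typ l.tail := by
  rw [← List.drop_one]; exact h.drop 1

lemma Typ.prefix {l xs ys : List ℤ} (h : Typ l) (hl : l = xs ++ ys) : Typ xs := by
  have := h.take xs.length
  rwa [hl, List.take_left] at this

lemma Typ.reverse {l : List ℤ} (h : Typ l) : Typ l.reverse := by
  constructor
  · show List.IsChain _ _; rw [List.isChain_reverse]
    exact List.IsChain.imp (fun a b hab => hab.symm) h.1
  · intro i j hij hj
    simp only [List.length_reverse] at hj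
    obtain ⟨t, ht1, ht2, ht3⟩ := h.2 (l.length - 1 - j) (l.length - 1 - i) (by omega) (by omega)
    refine ⟨l.length - 1 - t, by omega, by omega, ?_⟩
    rw [getD_reverse _ (by omega), getD_reverse _ (by omega), getD_reverse _ hj]
    have e3 : l.length - 1 - (l.length - 1 - t) = t := by omega
    rw [e3]
    rwa [min_comm, max_comm]

lemma Typ.neg {l : List ℤ} (h : Typ l) : Typ (l.map (fun x => -x)) := by
  constructor
  · show List.IsChain _ _; rw [List.isChain_map]
    exact List.IsChain.imp (fun a b hab hc => hab (by simpa using hc)) h.1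
  · intro i j hij hj
    simp only [List.length_map] at hj
    obtain ⟨t, ht1, ht2, ht3⟩ := h.2 i j hij hj
    refine ⟨t, ht1, ht2, ?_⟩
    rw [getD_neg _ (by omega), getD_neg _ (by omega), getD_neg _ hj]
    rcases ht3 with h3 | h3
    · right
      rw [max_neg_neg, neg_lt_neg_iff]
      exact h3
    · left
      rw [min_neg_neg, neg_lt_neg_iff]
      exact h3

section part2
variable {a b M m : ℤ} {r t1 t2 u1 u2 : List ℤ}

lemma mem_map_neg (x : ℤ) (l : List ℤ) : x ∈ l.map (fun y => -y) ↔ -x ∈ l := by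
  simp only [List.mem_map]
  constructor
  · rintro ⟨y, hy, rfl⟩; simpa
  · intro h; exact ⟨-x, h, by ring⟩

lemma step_max (h : Typ (a :: M :: r)) (hmin : ∀ x ∈ M :: r, a < x) : ∀ x ∈ r, x < M := by
  set l := a :: M :: r with hl
  have hTne : l.toFinset.Nonempty := ⟨a, by simp [hl]⟩
  set T := l.toFinset.max' hTne with hT
  have hTmem : T ∈ l := by
    have := l.toFinset.max'_mem hTne
    simpa using this
  have hle : ∀ x ∈ l, x ≤ T := fun x hx => Finset.le_max' _ _ (by simpa using hx)
  have haM : a < M := hmin M (by simp)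
  have haT : a < T := lt_of_lt_of_le haM (hle M (by simp [hl]))
  have key : T ∉ r := by
    intro hTr
    obtain ⟨j, hj, hjv⟩ := List.mem_iff_getElem.mp hTr
    have hj2 : j + 2 < l.length := by simp [hl]; omega
    have hv : l.getD (j + 2) 0 = T := by
      rw [getD_eq _ hj2]
      simpa [hl] using hjv
    obtain ⟨t, ht1, ht2, ht3⟩ := h.2 0 (j + 2) (by omega) hj2
    have h0 : l.getD 0 0 = a := by rw [getD_eq _ (by simp [hl])]; simp [hl]
    have htlen : t < l.length := by omega
    have htl : l.getD t 0 ∈ M :: r := by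
      rw [getD_eq _ htlen]
      obtain ⟨t', rfl⟩ : ∃ t', t = t' + 1 := ⟨t - 1, by omega⟩
      have : l[t' + 1] = (M :: r)[t']'(by simp [hl] at htlen ⊢; omega) := by
        simp [hl]
      rw [this]
      exact List.getElem_mem _
    have hat : a < l.getD t 0 := hmin _ htl
    have hTt : l.getD t 0 ≤ T := hle _ (by
      have := htl
      simp [hl]
      simp at this
      tauto)
    rw [h0, hv] at ht3
    rcases ht3 with h3 | h3
    · have : min a T = a := min_eq_left haT.le
      rw [this] at h3; linarith
    · have : max a T = T := max_eq_right haT.le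
      rw [this] at h3; linarith
  have hTM : T = M := by
    have := hTmem
    simp [hl] at this
    rcases this with h' | h' | h'
    · omega
    · exact h'
    · exact absurd h' key
  intro x hx
  have hxT : x ≤ T := hle x (by simp [hl, hx])
  have : x ≠ M := fun e => key (by rw [← hTM] at e; exact e ▸ hx)
  omega

lemma headmin_aux : ∀ n : ℕ, ∀ (a : ℤ) (t1 t2 : List ℤ), (a :: t1).length ≤ n →
    Typ (a :: t1) → Typ (a :: t2) → (∀ x ∈ t1, a < x) → (∀ x ∈ t2, a < x) →
    (∀ x : ℤ, x ∈ a :: t1 ↔ x ∈ a :: t2) → t1 = t2 := by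
  intro n
  induction n with
  | zero => intro a t1 t2 hlen; simp at hlen
  | succ n ih =>
    intro a t1 t2 hlen h1 h2 hm1 hm2 hset
    match t1, t2 with
    | [], [] => rfl
    | [], x :: t2' =>
      exfalso
      have hx : x ∈ a :: ([] : List ℤ) := (hset x).mpr (by simp)
      simp at hx
      exact (hm2 x (by simp)).ne' hx
    | x :: t1', [] =>
      exfalso
      have hx : x ∈ a :: ([] : List ℤ) := (hset x).mp (by simp)
      simp at hx
      exact (hm1 x (by simp)).ne' hx
    | M1 :: r1, M2 :: r2 =>
      have hM1 : ∀ x ∈ r1, x < M1 := step_max h1 hm1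
      have hM2 : ∀ x ∈ r2, x < M2 := step_max h2 hm2
      have hMeq : M1 = M2 := by
        have h12 : M1 ∈ a :: M2 :: r2 := (hset M1).mp (by simp)
        have h21 : M2 ∈ a :: M1 :: r1 := (hset M2).mpr (by simp)
        have ha1 : a < M1 := hm1 M1 (by simp)
        have ha2 : a < M2 := hm2 M2 (by simp)
        simp at h12 h21
        rcases h12 with h | h | h
        · omega
        · exact h
        · have := hM2 M1 h
          rcases h21 with h' | h' | h'
          · omega
          · omega
          · have := hM1 M2 h'; omega
      subst hMeq
      have hsett : ∀ x : ℤ, x ∈ M1 :: r1 ↔ x ∈ M1 :: r2 := by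
        intro x
        constructor
        · intro hx
          have := (hset x).mp (List.mem_cons_of_mem a hx)
          rcases List.mem_cons.mp this with h' | h'
          · exact absurd h' (hm1 x hx).ne'
          · exact h'
        · intro hx
          have := (hset x).mpr (List.mem_cons_of_mem a hx)
          rcases List.mem_cons.mp this with h' | h'
          · exact absurd h' (hm2 x hx).ne'
          · exact h'
      have key : r1.map (fun x => -x) = r2.map (fun x => -x) := by
        apply ih (-M1) (r1.map (fun x => -x)) (r2.map (fun x => -x))
        · simp at hlen ⊢; omega
        · have : (-M1 :: r1.map (fun x => -x)) = (M1 :: r1).map (fun x => -x) := by simp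
          rw [this]
          exact (h1.tail).neg
        · have : (-M1 :: r2.map (fun x => -x)) = (M1 :: r2).map (fun x => -x) := by simp
          rw [this]
          exact (h2.tail).neg
        · intro x hx
          rw [mem_map_neg] at hx
          have := hM1 _ hx; omega
        · intro x hx
          rw [mem_map_neg] at hx
          have := hM2 _ hx; omega
        · intro x
          have base := hsett (-x)
          constructor
          · intro hx
            rcases List.mem_cons.mp hx with h' | h'
            · simp [h']
            · rw [mem_map_neg] at h'
              have : -x ∈ M1 :: r2 := base.mp (List.mem_cons_of_mem _ h')
              rcases List.mem_cons.mp this with h'' | h''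
              · have hx2 : x = -M1 := by omega
                rw [hx2]; exact List.mem_cons_self
              · exact List.mem_cons_of_mem _ ((mem_map_neg x r2).mpr h'')
          · intro hx
            rcases List.mem_cons.mp hx with h' | h'
            · simp [h']
            · rw [mem_map_neg] at h'
              have : -x ∈ M1 :: r1 := base.mpr (List.mem_cons_of_mem _ h')
              rcases List.mem_cons.mp this with h'' | h''
              · have hx2 : x = -M1 := by omega
                rw [hx2]; exact List.mem_cons_self
              · exact List.mem_cons_of_mem _ ((mem_map_neg x r1).mpr h'')
      have : r1 = r2 := by
        have hinj : Function.Injective (fun x : ℤ => -x) := neg_injective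
        exact List.map_injective_iff.mpr hinj key
      rw [this]

lemma headmin_unique (h1 : Typ (a :: t1)) (h2 : Typ (b :: t2))
    (hm1 : ∀ x ∈ t1, a < x) (hm2 : ∀ x ∈ t2, b < x)
    (hset : ∀ x : ℤ, x ∈ a :: t1 ↔ x ∈ b :: t2) : a :: t1 = b :: t2 := by
  have hab : a = b := by
    have h1' := (hset a).mp (by simp)
    have h2' := (hset b).mpr (by simp)
    simp at h1' h2'
    rcases h1' with h | h
    · exact h
    · rcases h2' with h' | h'
      · exact h'.symm
      · have := hm2 a h; have := hm1 b h'; omega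
  subst hab
  rw [headmin_aux (a :: t1).length a t1 t2 le_rfl h1 h2 hm1 hm2 hset]

lemma endmin_unique (h1 : Typ (u1 ++ [m])) (h2 : Typ (u2 ++ [m]))
    (hm1 : ∀ x ∈ u1, m < x) (hm2 : ∀ x ∈ u2, m < x)
    (hset : ∀ x : ℤ, x ∈ u1 ++ [m] ↔ x ∈ u2 ++ [m]) : u1 = u2 := by
  have e1 : (u1 ++ [m]).reverse = m :: u1.reverse := by simp
  have e2 : (u2 ++ [m]).reverse = m :: u2.reverse := by simp
  have key : m :: u1.reverse = m :: u2.reverse := by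
    apply headmin_unique
    · rw [← e1]; exact h1.reverse
    · rw [← e2]; exact h2.reverse
    · intro x hx; exact hm1 x (by simpa using hx)
    · intro x hx; exact hm2 x (by simpa using hx)
    · intro x
      have := hset x
      simp at this ⊢
      tauto
  have : u1.reverse = u2.reverse := by injection key
  exact List.reverse_injective this

end part2

section part3
variable {L L1 L2 v : List ℤ} {m M : ℤ}

lemma extremes_adjacent (h : Typ L) (hmm : ∀ x ∈ L, m ≤ x ∧ x ≤ M)
    {i j : ℕ} (hij : i + 2 ≤ j) (hj : j < L.length)
    (he : (L.getD i 0 = m ∧ L.getD j 0 = M) ∨ (L.getD i 0 = M ∧ L.getD j 0 = m)) : False := by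
  obtain ⟨t, ht1, ht2, ht3⟩ := h.2 i j hij hj
  have htL : L.getD t 0 ∈ L := by
    rw [getD_eq _ (by omega)]; exact List.getElem_mem _
  obtain ⟨hm1, hm2⟩ := hmm _ htL
  have hiL : L.getD i 0 ∈ L := by
    rw [getD_eq _ (by omega)]; exact List.getElem_mem _
  have hmM : m ≤ M := le_trans (hmm _ hiL).1 (hmm _ hiL).2
  rcases he with ⟨e1, e2⟩ | ⟨e1, e2⟩ <;> rw [e1, e2] at ht3 <;>
    rcases ht3 with h3 | h3 <;>
      simp only [min_def, max_def] at h3 <;> split_ifs at h3 <;> linarith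

lemma left1_struct (h : Typ (v ++ [m])) (hmin : ∀ x ∈ v ++ [m], m ≤ x) (hm : m ∈ v) :
    ∃ u M, v = u ++ [m, M] ∧ m < M ∧ ∀ x ∈ u, m < x ∧ x < M := by
  set L := v ++ [m] with hL
  have hn : L.length = v.length + 1 := by simp [hL]
  have hlast : L.getD (L.length - 1) 0 = m := by
    rw [getD_eq _ (by omega)]
    have : L.length - 1 = v.length := by omega
    simp [hL, this]
  have hTne : L.toFinset.Nonempty := ⟨m, by simp [hL]⟩
  set T := L.toFinset.max' hTne with hT
  have hTmem : T ∈ L := by simpa using L.toFinset.max'_mem hTne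
  have hle : ∀ x ∈ L, x ≤ T := fun x hx => Finset.le_max' _ _ (by simpa using hx)
  -- the given occurrence of m inside v
  obtain ⟨q0, hq0, hq0v⟩ := List.mem_iff_getElem.mp hm
  have hq0L : L.getD q0 0 = m := by
    rw [getD_eq _ (by omega)]
    show (v ++ [m])[q0]'(by simp; omega) = m
    rw [List.getElem_append_left hq0]
    exact hq0v
  -- m < T
  have hchain := h.1
  have hadj : ∀ i, i + 1 < L.length → L.getD i 0 ≠ L.getD (i + 1) 0 := by
    intro i hi
    rw [getD_eq _ (by omega), getD_eq _ hi]
    exact List.isChain_iff_getElem.mp hchain i (by omega)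
  have hmT : m < T := by
    have h1 : L.getD (q0 + 1) 0 ≠ m := by
      have := hadj q0 (by omega)
      rw [hq0L] at this
      exact fun e => this (by rw [e])
    have h2 : L.getD (q0 + 1) 0 ∈ L := by
      rw [getD_eq _ (by omega)]; exact List.getElem_mem _
    have h3 := hmin _ h2
    have h4 := hle _ h2
    omega
  have hmmM : ∀ x ∈ L, m ≤ x ∧ x ≤ T := fun x hx => ⟨hmin x hx, hle x hx⟩
  -- adjacency of m-occurrences and T-occurrences
  have adj : ∀ i j, i < L.length → j < L.length → L.getD i 0 = m → L.getD j 0 = T →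
      j ≤ i + 1 ∧ i ≤ j + 1 := by
    intro i j hi hj him hjT
    constructor
    · by_contra hc
      exact extremes_adjacent h hmmM (i := i) (j := j) (by omega) hj (Or.inl ⟨him, hjT⟩)
    · by_contra hc
      exact extremes_adjacent h hmmM (i := j) (j := i) (by omega) hi (Or.inr ⟨hjT, him⟩)
  -- every occurrence of T is at L.length - 2
  have hTocc : ∀ j, j < L.length → L.getD j 0 = T → j = L.length - 2 := by
    intro j hj hjT
    have h1 := adj (L.length - 1) j (by omega) hj hlast hjT
    have : j ≠ L.length - 1 := by
      intro e; rw [e, hlast] at hjT; omega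
    omega
  -- T occurs somewhere
  obtain ⟨r, hr, hrv⟩ := List.mem_iff_getElem.mp hTmem
  have hrD : L.getD r 0 = T := by rw [getD_eq _ hr]; exact hrv
  have hrn : r = L.length - 2 := hTocc r hr hrD
  have hTn2 : L.getD (L.length - 2) 0 = T := by rw [← hrn]; exact hrD
  -- every occurrence of m other than the last is at L.length - 3
  have hmocc : ∀ i, i < L.length - 1 → L.getD i 0 = m → i = L.length - 3 := by
    intro i hi him
    have h1 := adj i (L.length - 2) (by omega) (by omega) him hTn2
    have : i ≠ L.length - 2 := by
      intro e; rw [e, hTn2] at him; omega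
    omega
  have hq0' : q0 = L.length - 3 := hmocc q0 (by omega) hq0L
  have hq0ne : q0 ≠ L.length - 2 := by
    intro e; rw [e, hTn2] at hq0L; omega
  have hn3 : 3 ≤ L.length := by omega
  -- assemble
  refine ⟨L.take (L.length - 3), T, ?_, hmT, ?_⟩
  · have e1 : v = L.take (L.length - 1) := by
      rw [hL]
      have : L.length - 1 = v.length := by omega
      rw [hL] at this
      rw [this, List.take_left]
    have e2 : L.take (L.length - 1) = L.take (L.length - 2) ++ [L[L.length - 2]'(by omega)] := by
      have h' : L.length - 1 = (L.length - 2) + 1 := by omega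
      rw [h', List.take_succ, List.getElem?_eq_getElem (by omega)]
      simp
    have e3 : L.take (L.length - 2) = L.take (L.length - 3) ++ [L[L.length - 3]'(by omega)] := by
      have h' : L.length - 2 = (L.length - 3) + 1 := by omega
      rw [h', List.take_succ, List.getElem?_eq_getElem (by omega)]
      simp
    have v1 : L[L.length - 2]'(by omega) = T := by rw [← getD_eq _ (by omega)]; exact hTn2
    have v2 : L[L.length - 3]'(by omega) = m := by
      rw [← getD_eq _ (by omega)]
      rw [← hq0']
      exact hq0L
    rw [e1, e2, e3, v1, v2]
    simp
  · intro x hx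
    obtain ⟨j, hj, hjv⟩ := List.mem_iff_getElem.mp hx
    have hjlen : j < L.length - 3 := by
      have := hj
      simp at this
      omega
    have hxD : L.getD j 0 = x := by
      rw [getD_eq _ (by omega)]
      rw [← hjv, List.getElem_take]
    have hxL : x ∈ L := by
      rw [← hxD, getD_eq _ (by omega)]
      exact List.getElem_mem _
    constructor
    · rcases lt_or_eq_of_le (hmin x hxL) with h' | h'
      · exact h'
      · exfalso
        have := hmocc j (by omega) (by rw [hxD, ← h'])
        omega
    · rcases lt_or_eq_of_le (hle x hxL) with h' | h'
      · exact h'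
      · exfalso
        have := hTocc j (by omega) (by rw [hxD, h'])
        omega

lemma left1_unique (h1 : Typ L1) (h2 : Typ L2)
    (hv1 : ∃ v1, L1 = v1 ++ [m] ∧ m ∈ v1) (hv2 : ∃ v2, L2 = v2 ++ [m] ∧ m ∈ v2)
    (hmin1 : ∀ x ∈ L1, m ≤ x) (hmin2 : ∀ x ∈ L2, m ≤ x)
    (hset : ∀ x : ℤ, x ∈ L1 ↔ x ∈ L2) : L1 = L2 := by
  obtain ⟨v1, rfl, hm1⟩ := hv1
  obtain ⟨v2, rfl, hm2⟩ := hv2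
  obtain ⟨u1, M1, e1, hM1, hu1⟩ := left1_struct h1 hmin1 hm1
  obtain ⟨u2, M2, e2, hM2, hu2⟩ := left1_struct h2 hmin2 hm2
  subst e1; subst e2
  have hL1 : u1 ++ [m, M1] ++ [m] = (u1 ++ [m]) ++ [M1, m] := by simp
  have hL2 : u2 ++ [m, M2] ++ [m] = (u2 ++ [m]) ++ [M2, m] := by simp
  have hMeq : M1 = M2 := by
    have ha : M1 ∈ u2 ++ [m, M2] ++ [m] := (hset M1).mp (by simp)
    have hb : M2 ∈ u1 ++ [m, M1] ++ [m] := (hset M2).mpr (by simp)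
    simp only [List.mem_append, List.mem_cons, List.mem_singleton,
      List.not_mem_nil, or_false] at ha hb
    have c1 : M1 ≤ M2 := by
      rcases ha with (h' | h' | h') | h'
      · exact le_of_lt (hu2 _ h').2
      · omega
      · omega
      · omega
    have c2 : M2 ≤ M1 := by
      rcases hb with (h' | h' | h') | h'
      · exact le_of_lt (hu1 _ h').2
      · omega
      · omega
      · omega
    omega
  subst hMeq
  have hueq : u1 = u2 := by
    apply endmin_unique (m := m)
    · exact h1.prefix (by rw [hL1])
    · exact h2.prefix (by rw [hL2])
    · intro x hx; exact (hu1 x hx).1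
    · intro x hx; exact (hu2 x hx).1
    · intro x
      have base := hset x
      simp only [List.mem_append, List.mem_cons, List.mem_singleton,
        List.not_mem_nil, or_false] at base ⊢
      constructor
      · rintro (h' | h')
        · have hx1 : x < M1 := (hu1 x h').2
          have hx0 : m < x := (hu1 x h').1
          rcases base.mp (Or.inl (Or.inl h')) with (h'' | h'' | h'') | h''
          · exact Or.inl h''
          · omega
          · omega
          · omega
        · exact Or.inr h'
      · rintro (h' | h')
        · have hx1 : x < M1 := (hu2 x h').2
          have hx0 : m < x := (hu2 x h').1
          rcases base.mpr (Or.inl (Or.inl h')) with (h'' | h'' | h'') | h''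
          · exact Or.inl h''
          · omega
          · omega
          · omega
        · exact Or.inr h'
  rw [hueq]

end part3

section part4
variable {l l1 l2 : List ℤ}

noncomputable def theMin (l : List ℤ) : ℤ := WithTop.untopD 0 l.toFinset.min

noncomputable def lastIdx (l : List ℤ) : ℕ :=
  WithBot.unbotD 0 (((Finset.range l.length).filter (fun i => l.getD i 0 = theMin l)).max)

lemma toFinset_nonempty (hl : l ≠ []) : l.toFinset.Nonempty := by
  obtain ⟨x, hx⟩ := List.exists_mem_of_ne_nil l hl
  exact ⟨x, by simp [hx]⟩

lemma theMin_spec (hl : l ≠ []) : theMin l ∈ l ∧ ∀ x ∈ l, theMin l ≤ x := by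
  have hne := toFinset_nonempty hl
  have he : theMin l = l.toFinset.min' hne := by
    unfold theMin
    rw [← Finset.coe_min' hne]
    rfl
  constructor
  · rw [he]; simpa using l.toFinset.min'_mem hne
  · intro x hx; rw [he]; exact Finset.min'_le _ _ (by simpa using hx)

lemma lastIdx_spec (hl : l ≠ []) :
    lastIdx l < l.length ∧ l.getD (lastIdx l) 0 = theMin l ∧
      ∀ i, lastIdx l < i → i < l.length → l.getD i 0 ≠ theMin l := by
  classical
  set s := (Finset.range l.length).filter (fun i => l.getD i 0 = theMin l) with hs
  have hne : s.Nonempty := by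
    obtain ⟨hmem, _⟩ := theMin_spec hl
    obtain ⟨j, hj, hjv⟩ := List.mem_iff_getElem.mp hmem
    refine ⟨j, ?_⟩
    simp only [hs, Finset.mem_filter, Finset.mem_range]
    exact ⟨hj, by rw [getD_eq _ hj]; exact hjv⟩
  have he : lastIdx l = s.max' hne := by
    unfold lastIdx
    rw [← hs, ← Finset.coe_max' hne]
    rfl
  have hmem : lastIdx l ∈ s := by rw [he]; exact s.max'_mem hne
  simp only [hs, Finset.mem_filter, Finset.mem_range] at hmem
  refine ⟨hmem.1, hmem.2, fun i hi hil hiv => ?_⟩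
  have : i ∈ s := by
    simp only [hs, Finset.mem_filter, Finset.mem_range]
    exact ⟨hil, hiv⟩
  have := Finset.le_max' s i this
  rw [← he] at this
  omega

noncomputable def enc (l : List ℤ) : Finset ℤ × Finset ℤ := by
  classical
  exact if l = [] then (∅, ∅) else
    ((l.take (lastIdx l + 1)).toFinset,
     (l.drop (lastIdx l + 1)).toFinset ∪
       (if theMin l ∈ l.take (lastIdx l) then {theMin l} else ∅))

lemma enc_nil : enc ([] : List ℤ) = (∅, ∅) := by simp [enc]

lemma enc_ne (hl : l ≠ []) : enc l =
    ((l.take (lastIdx l + 1)).toFinset,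
     (l.drop (lastIdx l + 1)).toFinset ∪
       (if theMin l ∈ l.take (lastIdx l) then {theMin l} else ∅)) := by
  classical
  simp [enc, hl]

lemma min_mem_take (hl : l ≠ []) : theMin l ∈ l.take (lastIdx l + 1) := by
  obtain ⟨hp, hpv, _⟩ := lastIdx_spec hl
  have h1 : lastIdx l < (l.take (lastIdx l + 1)).length := by simp; omega
  have : (l.take (lastIdx l + 1))[lastIdx l]'h1 = l[lastIdx l]'hp := List.getElem_take ..
  rw [← getD_eq _ hp, hpv] at this
  rw [← this]
  exact List.getElem_mem _

lemma take_eq (hl : l ≠ []) :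
    l.take (lastIdx l + 1) = l.take (lastIdx l) ++ [theMin l] := by
  obtain ⟨hp, hpv, _⟩ := lastIdx_spec hl
  rw [List.take_succ, List.getElem?_eq_getElem hp]
  rw [← getD_eq _ hp, hpv]
  simp

lemma drop_eq (hl : l ≠ []) :
    l.drop (lastIdx l) = theMin l :: l.drop (lastIdx l + 1) := by
  obtain ⟨hp, hpv, _⟩ := lastIdx_spec hl
  rw [List.drop_eq_getElem_cons hp, ← getD_eq _ hp, hpv]

lemma not_min_mem_drop (hl : l ≠ []) : theMin l ∉ l.drop (lastIdx l + 1) := by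
  obtain ⟨hp, hpv, h3⟩ := lastIdx_spec hl
  intro hmem
  obtain ⟨j, hj, hjv⟩ := List.mem_iff_getElem.mp hmem
  have hlen : lastIdx l + 1 + j < l.length := by simp at hj; omega
  have : l[lastIdx l + 1 + j]'hlen = theMin l := by rw [← hjv, List.getElem_drop]
  exact h3 (lastIdx l + 1 + j) (by omega) hlen (by rw [getD_eq _ hlen]; exact this)

lemma mem_drop_gt (hl : l ≠ []) : ∀ x ∈ l.drop (lastIdx l + 1), theMin l < x := by
  obtain ⟨hp, hpv, h3⟩ := lastIdx_spec hl
  intro x hx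
  have hxl : x ∈ l := List.mem_of_mem_drop hx
  have h1 := (theMin_spec hl).2 x hxl
  rcases lt_or_eq_of_le h1 with h' | h'
  · exact h'
  · exact absurd (h' ▸ hx) (not_min_mem_drop hl)

lemma enc_injective (h1 : Typ l1) (h2 : Typ l2) (he : enc l1 = enc l2) : l1 = l2 := by
  classical
  by_cases e1 : l1 = [] <;> by_cases e2 : l2 = []
  · rw [e1, e2]
  · exfalso
    rw [e1, enc_nil, enc_ne e2] at he
    have : theMin l2 ∈ (∅ : Finset ℤ) := by
      rw [show (∅ : Finset ℤ) = (l2.take (lastIdx l2 + 1)).toFinset from congrArg Prod.fst he]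
      simpa using min_mem_take e2
    simp at this
  · exfalso
    rw [e2, enc_nil, enc_ne e1] at he
    have : theMin l1 ∈ (∅ : Finset ℤ) := by
      rw [show (∅ : Finset ℤ) = (l1.take (lastIdx l1 + 1)).toFinset from (congrArg Prod.fst he).symm]
      simpa using min_mem_take e1
    simp at this
  · rw [enc_ne e1, enc_ne e2] at he
    have hA : (l1.take (lastIdx l1 + 1)).toFinset = (l2.take (lastIdx l2 + 1)).toFinset :=
      congrArg Prod.fst he
    have hB : (l1.drop (lastIdx l1 + 1)).toFinset ∪
        (if theMin l1 ∈ l1.take (lastIdx l1) then {theMin l1} else ∅) =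
        (l2.drop (lastIdx l2 + 1)).toFinset ∪
        (if theMin l2 ∈ l2.take (lastIdx l2) then {theMin l2} else ∅) :=
      congrArg Prod.snd he
    -- the two minima agree
    have hmin1 := theMin_spec e1
    have hmin2 := theMin_spec e2
    have hmeq : theMin l1 = theMin l2 := by
      have hm12 : theMin l2 ∈ l1.take (lastIdx l1 + 1) := by
        have := min_mem_take e2
        rw [← List.mem_toFinset, ← hA, List.mem_toFinset] at this
        exact this
      have hm21 : theMin l1 ∈ l2.take (lastIdx l2 + 1) := by
        have := min_mem_take e1
        rw [← List.mem_toFinset, hA, List.mem_toFinset] at this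
        exact this
      have a1 := hmin1.2 _ (List.mem_of_mem_take hm12)
      have a2 := hmin2.2 _ (List.mem_of_mem_take hm21)
      omega
    -- bits agree
    have bit_iff : ∀ (l : List ℤ), l ≠ [] → theMin l = theMin l1 →
        ((theMin l1 ∈ (l.drop (lastIdx l + 1)).toFinset ∪
          (if theMin l ∈ l.take (lastIdx l) then {theMin l} else ∅)) ↔
          theMin l1 ∈ l.take (lastIdx l)) := by
      intro l hl hml
      rw [Finset.mem_union]
      constructor
      · rintro (h' | h')
        · exfalso
          rw [List.mem_toFinset] at h'
          refine not_min_mem_drop hl ?_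
          rw [hml]; exact h'
        · split_ifs at h' with hc
          · rw [Finset.mem_singleton] at h'
            rw [← hml]; exact hc
          · exact absurd h' (Finset.notMem_empty _)
      · intro h'
        right
        have h'' : theMin l ∈ l.take (lastIdx l) := by rw [hml]; exact h'
        rw [if_pos h'', Finset.mem_singleton]
        exact hml.symm
    have hbit : (theMin l1 ∈ l1.take (lastIdx l1)) ↔ (theMin l1 ∈ l2.take (lastIdx l2)) := by
      rw [← bit_iff l1 e1 rfl, ← bit_iff l2 e2 hmeq.symm, hB]
    -- drop parts have equal element sets
    have hdropset : ∀ x : ℤ, x ∈ l1.drop (lastIdx l1 + 1) ↔ x ∈ l2.drop (lastIdx l2 + 1) := by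
      intro x
      constructor
      · intro hx
        have hxm : x ≠ theMin l2 := by
          intro e
          rw [e, ← hmeq] at hx
          exact not_min_mem_drop e1 hx
        have hxB : x ∈ (l2.drop (lastIdx l2 + 1)).toFinset ∪
            (if theMin l2 ∈ l2.take (lastIdx l2) then {theMin l2} else ∅) := by
          rw [← hB, Finset.mem_union]
          left; simpa using hx
        rw [Finset.mem_union] at hxB
        rcases hxB with h' | h'
        · simpa using h'
        · exfalso
          split_ifs at h' with hc
          · rw [Finset.mem_singleton] at h'; exact hxm h'
          · exact absurd h' (Finset.notMem_empty _)
      · intro hx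
        have hxm : x ≠ theMin l1 := by
          intro e
          rw [e, hmeq] at hx
          exact not_min_mem_drop e2 hx
        have hxB : x ∈ (l1.drop (lastIdx l1 + 1)).toFinset ∪
            (if theMin l1 ∈ l1.take (lastIdx l1) then {theMin l1} else ∅) := by
          rw [hB, Finset.mem_union]
          left; simpa using hx
        rw [Finset.mem_union] at hxB
        rcases hxB with h' | h'
        · simpa using h'
        · exfalso
          split_ifs at h' with hc
          · rw [Finset.mem_singleton] at h'; exact hxm h'
          · exact absurd h' (Finset.notMem_empty _)
    -- right parts are equal
    have hdropeq : l1.drop (lastIdx l1 + 1) = l2.drop (lastIdx l2 + 1) := by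
      have key : theMin l1 :: l1.drop (lastIdx l1 + 1) = theMin l1 :: l2.drop (lastIdx l2 + 1) := by
        apply headmin_unique
        · rw [← drop_eq e1]; exact h1.drop _
        · rw [hmeq, ← drop_eq e2]; exact h2.drop _
        · exact mem_drop_gt e1
        · rw [hmeq]; exact mem_drop_gt e2
        · intro x
          rw [List.mem_cons, List.mem_cons, hdropset x]
      injection key
    -- left parts are equal
    have htakeeq : l1.take (lastIdx l1 + 1) = l2.take (lastIdx l2 + 1) := by
      have hsetL : ∀ x : ℤ, x ∈ l1.take (lastIdx l1 + 1) ↔ x ∈ l2.take (lastIdx l2 + 1) := by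
        intro x
        rw [← List.mem_toFinset, hA, List.mem_toFinset]
      have hminL1 : ∀ x ∈ l1.take (lastIdx l1 + 1), theMin l1 ≤ x :=
        fun x hx => hmin1.2 x (List.mem_of_mem_take hx)
      have hminL2 : ∀ x ∈ l2.take (lastIdx l2 + 1), theMin l1 ≤ x :=
        fun x hx => hmeq ▸ hmin2.2 x (List.mem_of_mem_take hx)
      have e1' : l1.take (lastIdx l1 + 1) = l1.take (lastIdx l1) ++ [theMin l1] := take_eq e1
      have e2' : l2.take (lastIdx l2 + 1) = l2.take (lastIdx l2) ++ [theMin l1] := by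
        rw [take_eq e2, hmeq]
      by_cases hb : theMin l1 ∈ l1.take (lastIdx l1)
      · apply left1_unique (m := theMin l1) (h1.take _) (h2.take _)
        · exact ⟨l1.take (lastIdx l1), e1', hb⟩
        · exact ⟨l2.take (lastIdx l2), e2', by rwa [← hbit]⟩
        · exact hminL1
        · exact hminL2
        · exact hsetL
      · have hb2 : theMin l1 ∉ l2.take (lastIdx l2) := by rwa [← hbit]
        have hu : l1.take (lastIdx l1) = l2.take (lastIdx l2) := by
          apply endmin_unique (m := theMin l1)
          · rw [← e1']; exact h1.take _
          · rw [← e2']; exact h2.take _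
          · intro x hx
            have h' := hminL1 x (e1' ▸ List.mem_append_left _ hx)
            rcases lt_or_eq_of_le h' with h'' | h''
            · exact h''
            · exact absurd (h'' ▸ hx) hb
          · intro x hx
            have h' := hminL2 x (e2' ▸ List.mem_append_left _ hx)
            rcases lt_or_eq_of_le h' with h'' | h''
            · exact h''
            · exact absurd (h'' ▸ hx) hb2
          · intro x
            rw [← e1', ← e2']
            exact hsetL x
        rw [e1', e2', hu]
    calc l1 = l1.take (lastIdx l1 + 1) ++ l1.drop (lastIdx l1 + 1) :=
            (List.take_append_drop _ _).symm
      _ = l2.take (lastIdx l2 + 1) ++ l2.drop (lastIdx l2 + 1) := by rw [htakeeq, hdropeq]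
      _ = l2 := List.take_append_drop _ _

end part4

lemma enc_subset {k : ℕ} {l : List ℤ} (hbd : ∀ x ∈ l, 0 ≤ x ∧ x ≤ (k : ℤ)) :
    (enc l).1 ⊆ Finset.Icc (0:ℤ) k ∧ (enc l).2 ⊆ Finset.Icc (0:ℤ) k := by
  classical
  by_cases hl : l = []
  · subst hl; rw [enc_nil]; exact ⟨by simp, by simp⟩
  · rw [enc_ne hl]
    constructor
    · intro x hx
      simp only [List.mem_toFinset] at hx
      exact Finset.mem_Icc.mpr (hbd x (List.mem_of_mem_take hx))
    · intro x hx
      rw [Finset.mem_union] at hx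
      rcases hx with h' | h'
      · exact Finset.mem_Icc.mpr (hbd x (List.mem_of_mem_drop (List.mem_toFinset.mp h')))
      · split_ifs at h' with hc
        · rw [Finset.mem_singleton] at h'
          subst h'
          exact Finset.mem_Icc.mpr (hbd _ (theMin_spec hl).1)
        · exact absurd h' (Finset.notMem_empty _)

end BK

/-- Bodlaender–Kloks, Lemma 3.5: the number of typical sequences with values in
`{0, …, k}` is at most `2^{2k+2} = 2^{O(k)}`. -/
theorem card_typicalSeq_le (k : ℕ) :
    (TypicalSeq k).Finite ∧ Nat.card (TypicalSeq k) ≤ 2 ^ (2 * k + 2) := by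
  classical
  set P := (Finset.Icc (0:ℤ) k).powerset with hP
  set Q := P ×ˢ P with hQ
  have hF : ∀ l : ↥(TypicalSeq k), BK.enc l.1 ∈ Q := by
    rintro ⟨l, hb, hc, ht⟩
    obtain ⟨hs1, hs2⟩ := BK.enc_subset (k := k) hb
    rw [hQ, Finset.mem_product]
    exact ⟨Finset.mem_powerset.mpr hs1, Finset.mem_powerset.mpr hs2⟩
  let F : ↥(TypicalSeq k) → ↥Q := fun l => ⟨BK.enc l.1, hF l⟩
  have hinj : Function.Injective F := by
    rintro ⟨x, hx⟩ ⟨y, hy⟩ h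
    simp only [F, Subtype.mk.injEq] at h
    exact Subtype.ext (BK.enc_injective ⟨hx.2.1, hx.2.2⟩ ⟨hy.2.1, hy.2.2⟩ h)
  haveI : Finite ↥(TypicalSeq k) := Finite.of_injective F hinj
  refine ⟨Set.toFinite _, ?_⟩
  have hcard : Nat.card ↥(TypicalSeq k) ≤ Nat.card ↥Q := Nat.card_le_card_of_injective F hinj
  have hIcc : (Finset.Icc (0:ℤ) k).card = k + 1 := by
    rw [Int.card_Icc]; omega
  have hQcard : Nat.card ↥Q = 2 ^ (2 * k + 2) := by
    rw [Nat.card_eq_finsetCard, hQ, Finset.card_product, hP,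
      Finset.card_powerset, hIcc, ← pow_add]
    congr 1
    omega
  rw [hQcard] at hcard
  exact hcard
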